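/- Let μ be a probability measure on Ω with D(μ‖μ0) ≤ d. Then for every real s > 0, μ(A) ≤ s·ln(1 + (e^{1/s} − 1)·μ0(A)) + s·d. (Weak-duality upper bound underlying Theorem 1.) -/

import Mathlib

open MeasureTheory Real

open scoped Classical in
/-- Kullback–Leibler divergence `D(μ‖ν)` between measures, valued in `EReal`:
infinite unless `μ ≪ ν` and the log-likelihood ratio is `μ`-integrable. -/
noncomputable def klDiv {Ω : Type*} [MeasurableSpace Ω] (μ ν : Measure Ω) : EReal :=
  if μ ≪ ν ∧ Integrable (llr μ ν) μ then ((∫ ω, llr μ ν ω ∂μ : ℝ) : EReal) else ⊤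

/-- Weak-duality upper bound underlying Theorem 1: if `D(μ‖μ0) ≤ d`, then for every `s > 0`,
`μ(A) ≤ s·ln(1 + (e^{1/s} − 1)·μ0(A)) + s·d`. -/
theorem stmt_0 {Ω : Type*} [MeasurableSpace Ω] (μ0 μ : Measure Ω)
    [IsProbabilityMeasure μ0] [IsProbabilityMeasure μ]
    (A : Set Ω) (hA : MeasurableSet A) (d : ℝ) (hd : 0 ≤ d)
    (hKL : klDiv μ μ0 ≤ (d : EReal)) (s : ℝ) (hs : 0 < s) :
    (μ A).toReal ≤ s * Real.log (1 + (Real.exp (1 / s) - 1) * (μ0 A).toReal) + s * d := by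
  classical
  -- Extract absolute continuity, integrability, and the KL bound from `hKL`.
  by_cases hcond : μ ≪ μ0 ∧ Integrable (llr μ μ0) μ
  swap
  · exfalso
    simp only [klDiv, if_neg hcond, top_le_iff] at hKL
    exact (EReal.coe_ne_top d) hKL
  obtain ⟨hac, hint⟩ := hcond
  have hKL' : ∫ ω, llr μ μ0 ω ∂μ ≤ d := by
    simp only [klDiv, if_pos (⟨hac, hint⟩ : μ ≪ μ0 ∧ Integrable (llr μ μ0) μ),
      EReal.coe_le_coe_iff] at hKL
    exact hKL
  -- The test function
  set f : Ω → ℝ := A.indicator (fun _ => 1 / s) with hf_def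
  have hf_meas : Measurable f := measurable_const.indicator hA
  have hf_int_μ : Integrable f μ := (integrable_const (1 / s)).indicator hA
  -- exp ∘ f pointwise
  have hef : ∀ x, Real.exp (f x) = A.indicator (fun _ => Real.exp (1 / s) - 1) x + 1 := by
    intro x
    by_cases hx : x ∈ A <;> simp [hf_def, Set.indicator_apply, hx]
  have hexp_int : Integrable (fun x => Real.exp (f x)) μ0 := by
    have : Integrable (fun x => A.indicator (fun _ => Real.exp (1 / s) - 1) x + 1) μ0 :=
      ((integrable_const _).indicator hA).add (integrable_const 1)
    exact this.congr (Filter.Eventually.of_forall fun x => (hef x).symm)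
  -- value of the normalizing constant
  have hZ : ∫ x, Real.exp (f x) ∂μ0 = 1 + (Real.exp (1 / s) - 1) * (μ0 A).toReal := by
    rw [integral_congr_ae (Filter.Eventually.of_forall hef),
      integral_add ((integrable_const _).indicator hA) (integrable_const 1),
      integral_indicator_const _ hA]
    simp [smul_eq_mul, Measure.real]
    ring
  -- value of ∫ f dμ
  have hfμ : ∫ x, f x ∂μ = (1 / s) * (μ A).toReal := by
    rw [hf_def, integral_indicator_const _ hA]
    simp [smul_eq_mul, mul_comm, Measure.real]
  -- Gibbs inequality: 0 ≤ ∫ llr μ (μ0.tilted f) dμ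
  have htilt_prob : IsProbabilityMeasure (μ0.tilted f) :=
    isProbabilityMeasure_tilted hexp_int
  have hac_tilt : μ ≪ μ0.tilted f := hac.trans (absolutelyContinuous_tilted hexp_int)
  have hint_tilt : Integrable (llr μ (μ0.tilted f)) μ :=
    integrable_llr_tilted_right hac hf_int_μ hint hexp_int
  have hgibbs : 0 ≤ ∫ x, llr μ (μ0.tilted f) x ∂μ := by
    set ν := μ0.tilted f
    -- pointwise lower bound: 1 - (ν.rnDeriv μ x).toReal ≤ llr μ ν x  a.e. μ
    have h_ae : ∀ᵐ x ∂μ, 1 - (ν.rnDeriv μ x).toReal ≤ llr μ ν x := by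
      filter_upwards [Measure.rnDeriv_pos hac_tilt,
        hac_tilt.ae_le (Measure.rnDeriv_lt_top μ ν),
        Measure.inv_rnDeriv hac_tilt] with x hpos hlt hinv
      have ht_pos : 0 < (μ.rnDeriv ν x).toReal := ENNReal.toReal_pos hpos.ne' hlt.ne
      have hlog : Real.log ((μ.rnDeriv ν x).toReal)⁻¹ ≤ ((μ.rnDeriv ν x).toReal)⁻¹ - 1 :=
        Real.log_le_sub_one_of_pos (inv_pos.mpr ht_pos)
      simp only [Pi.inv_apply] at hinv
      have hinv' : ((μ.rnDeriv ν x).toReal)⁻¹ = (ν.rnDeriv μ x).toReal := by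
        rw [← ENNReal.toReal_inv]
        exact congrArg ENNReal.toReal hinv
      rw [Real.log_inv, hinv'] at hlog
      unfold llr
      linarith
    have h_int_rn : Integrable (fun x => 1 - (ν.rnDeriv μ x).toReal) μ :=
      (integrable_const 1).sub (Measure.integrable_toReal_rnDeriv)
    have h_le : ∫ x, (1 - (ν.rnDeriv μ x).toReal) ∂μ ≤ ∫ x, llr μ ν x ∂μ :=
      integral_mono_ae h_int_rn hint_tilt h_ae
    have h_int_val : ∫ x, (ν.rnDeriv μ x).toReal ∂μ ≤ 1 := by
      have := Measure.setIntegral_toReal_rnDeriv_le (μ := ν) (ν := μ)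
        (s := Set.univ) (measure_ne_top ν _)
      simpa [measure_univ] using this
    have : 0 ≤ ∫ x, (1 - (ν.rnDeriv μ x).toReal) ∂μ := by
      rw [integral_sub (integrable_const 1) Measure.integrable_toReal_rnDeriv]
      simp only [integral_const, Measure.real, measure_univ, ENNReal.toReal_one, smul_eq_mul, one_mul]
      linarith
    linarith
  -- Donsker–Varadhan style bound
  have hDV : ∫ x, f x ∂μ ≤ ∫ x, llr μ μ0 x ∂μ + Real.log (∫ x, Real.exp (f x) ∂μ0) := by
    have := integral_llr_tilted_right hac hf_int_μ hexp_int hint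
    rw [this] at hgibbs
    linarith
  rw [hfμ, hZ] at hDV
  have hfinal : (1 / s) * (μ A).toReal ≤
      d + Real.log (1 + (Real.exp (1 / s) - 1) * (μ0 A).toReal) := by linarith
  have hs' : s ≠ 0 := ne_of_gt hs
  have hm : (μ A).toReal ≤ s * (d + Real.log (1 + (Real.exp (1 / s) - 1) * (μ0 A).toReal)) := by
    have h2 := mul_le_mul_of_nonneg_left hfinal hs.le
    rwa [← mul_assoc, mul_one_div_cancel hs', one_mul] at h2
  calc (μ A).toReal ≤ s * (d + Real.log (1 + (Real.exp (1 / s) - 1) * (μ0 A).toReal)) := hm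
    _ = s * Real.log (1 + (Real.exp (1 / s) - 1) * (μ0 A).toReal) + s * d := by ring
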